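/- For the vertex normals N_k = (ν_k + ν_{k-1})/(1 + cos θ_k) and unit tangents t_k = (p_{k+1}−p_k)/|p_{k+1}−p_k|, one has the discrete Frenet-type formula (N_{k+1} − N_k)/|p_{k+1} − p_k| = −κ(e_k) t_k, where κ(e_k) = (tan(θ_k/2) + tan(θ_{k+1}/2))/|p_{k+1} − p_k|. -/

import Mathlib

open Real Finset
open scoped RealInnerProductSpace

abbrev E2 := EuclideanSpace ℝ (Fin 2)

/-- Rotation by π/2 in the plane. -/
noncomputable def Rot (v : E2) : E2 :=
  (WithLp.equiv 2 (Fin 2 → ℝ)).symm ![-v 1, v 0]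

/-- Rotation by angle θ in the plane. -/
noncomputable def RotBy (θ : ℝ) (v : E2) : E2 :=
  (WithLp.equiv 2 (Fin 2 → ℝ)).symm
    ![Real.cos θ * v 0 - Real.sin θ * v 1, Real.sin θ * v 0 + Real.cos θ * v 1]

lemma RotBy_eq (θ : ℝ) (v : E2) : RotBy θ v = Real.cos θ • v + Real.sin θ • Rot v := by
  ext i
  fin_cases i <;>
    simp [RotBy, Rot, WithLp.equiv_symm_apply, PiLp.toLp_apply] <;> ring

lemma Rot_Rot (v : E2) : Rot (Rot v) = -v := by
  ext i
  fin_cases i <;> simp [Rot, WithLp.equiv_symm_apply, PiLp.toLp_apply]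

lemma RotBy_RotBy (a b : ℝ) (v : E2) : RotBy a (RotBy b v) = RotBy (a + b) v := by
  ext i
  fin_cases i <;>
    simp [RotBy, WithLp.equiv_symm_apply, PiLp.toLp_apply, Real.cos_add, Real.sin_add] <;> ring

lemma RotBy_zero (v : E2) : RotBy 0 v = v := by
  ext i
  fin_cases i <;> simp [RotBy, WithLp.equiv_symm_apply, PiLp.toLp_apply]

lemma tan_half_eq (x : ℝ) (hx : x ∈ Set.Ioo (-π) π) :
    Real.tan (x / 2) = Real.sin x / (1 + Real.cos x) := by
  have hc : 0 < Real.cos (x / 2) :=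
    Real.cos_pos_of_mem_Ioo ⟨by linarith [hx.1], by linarith [hx.2]⟩
  have h1 : Real.sin x = 2 * Real.sin (x / 2) * Real.cos (x / 2) := by
    rw [show x = 2 * (x / 2) by ring, Real.sin_two_mul]; ring_nf
  have h2 : 1 + Real.cos x = 2 * Real.cos (x / 2) ^ 2 := by
    have := Real.cos_sq (x / 2)
    rw [show 2 * (x / 2) = x by ring] at this
    linarith
  rw [Real.tan_eq_sin_div_cos, h1, h2]
  field_simp

lemma one_add_cos_pos (x : ℝ) (hx : x ∈ Set.Ioo (-π) π) : 0 < 1 + Real.cos x := by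
  have hc : 0 < Real.cos (x / 2) :=
    Real.cos_pos_of_mem_Ioo ⟨by linarith [hx.1], by linarith [hx.2]⟩
  have h2 : 1 + Real.cos x = 2 * Real.cos (x / 2) ^ 2 := by
    have := Real.cos_sq (x / 2)
    rw [show 2 * (x / 2) = x by ring] at this
    linarith
  nlinarith

theorem discrete_frenet_formula (n : ℕ) [NeZero n]
    (p : ZMod n → E2) (hreg : ∀ k, p (k + 1) ≠ p k)
    (ν : ZMod n → E2)
    (hν : ∀ k, ν k = Rot (‖p (k + 1) - p k‖⁻¹ • (p (k + 1) - p k)))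
    (θ : ZMod n → ℝ) (hθrange : ∀ k, θ k ∈ Set.Ioo (-π) π)
    (hθ : ∀ k, RotBy (θ k) (ν (k - 1)) = ν k)
    (N : ZMod n → E2)
    (hN : ∀ k, N k = (1 + Real.cos (θ k))⁻¹ • (ν k + ν (k - 1))) :
    ∀ k : ZMod n,
      ‖p (k + 1) - p k‖⁻¹ • (N (k + 1) - N k) =
        -(((Real.tan (θ k / 2) + Real.tan (θ (k + 1) / 2)) / ‖p (k + 1) - p k‖) •
          (‖p (k + 1) - p k‖⁻¹ • (p (k + 1) - p k))) := by
  intro k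
  set e : E2 := p (k + 1) - p k with he_def
  have he : ‖e‖ ≠ 0 := norm_ne_zero_iff.mpr (sub_ne_zero.mpr (hreg k))
  set T : E2 := ‖e‖⁻¹ • e with hT_def
  have hνk : ν k = Rot T := hν k
  have hRT : Rot (ν k) = -T := by rw [hνk, Rot_Rot]
  -- angles
  have hA := hθrange k
  have hB := hθrange (k + 1)
  have hcA : 0 < 1 + Real.cos (θ k) := one_add_cos_pos _ hA
  have hcB : 0 < 1 + Real.cos (θ (k + 1)) := one_add_cos_pos _ hB
  have htA : Real.tan (θ k / 2) = Real.sin (θ k) / (1 + Real.cos (θ k)) := tan_half_eq _ hA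
  have htB : Real.tan (θ (k + 1) / 2) =
      Real.sin (θ (k + 1)) / (1 + Real.cos (θ (k + 1))) := tan_half_eq _ hB
  -- neighboring normals in terms of ν k
  have hk1 : ν (k + 1) = RotBy (θ (k + 1)) (ν k) := by
    have := hθ (k + 1)
    rw [add_sub_cancel_right] at this
    exact this.symm
  have hkm : ν (k - 1) = RotBy (-(θ k)) (ν k) := by
    rw [← hθ k, RotBy_RotBy, neg_add_cancel, RotBy_zero]
  -- express N k and N (k+1)
  have hNk : N k = ν k + Real.tan (θ k / 2) • T := by
    rw [hN k, hkm, RotBy_eq, hRT, htA, Real.cos_neg, Real.sin_neg]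
    match_scalars <;> field_simp <;> ring
  have hNk1 : N (k + 1) = ν k - Real.tan (θ (k + 1) / 2) • T := by
    have : (k + 1 : ZMod n) - 1 = k := add_sub_cancel_right k 1
    rw [hN (k + 1), this, hk1, RotBy_eq, hRT, htB]
    match_scalars <;> field_simp <;> ring
  rw [hNk, hNk1]
  match_scalars <;> · simp only [div_eq_mul_inv, mul_comm]; ring
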